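/- Let (R, m) be an approximately Gorenstein Noetherian local ring and let {I_t} be a sequence of m-primary irreducible ideals cofinal with the powers of m. Let f : R → M be a homomorphism of finitely generated R-modules. Then f is a split injection if and only if the induced map f ⊗_R R/I_t : R/I_t → M/I_t M is injective for every t. -/

import Mathlib

open Filter IsLocalRing

universe u

section FrobeniusTwist

/-- For a ring `R` of prime characteristic `p`, `FrobTwist R p e` is the ring `R^{1/p^e}` of
`p^e`-th roots of elements of `R`, realized as the ring `R` itself, viewed as an `R`-algebra
via the `e`-th iterate of the Frobenius endomorphism (so `r • x = r^{p^e} * x`). -/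
def FrobTwist (R : Type u) [CommRing R] (p e : ℕ) : Type u := R

variable (R : Type u) [CommRing R] (p : ℕ) [Fact p.Prime] [CharP R p]

instance (e : ℕ) : CommRing (FrobTwist R p e) := inferInstanceAs (CommRing R)

/-- The identity map of `R`, viewed as a map `R → R^{1/p^e}` (sending `r` to `r`,
i.e. to `(r^{p^e})^{1/p^e}`). -/
def FrobTwist.of (e : ℕ) : R →+* FrobTwist R p e := RingHom.id R

instance (e : ℕ) : Module R (FrobTwist R p e) :=
  Module.compHom (FrobTwist R p e) ((FrobTwist.of R p e).comp (iterateFrobenius R p e))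

/-- `R` is `F`-finite: `R^{1/p}` is a finitely generated `R`-module. -/
def FFinite : Prop := Module.Finite R (FrobTwist R p 1)

end FrobeniusTwist

section Summands

variable (R : Type u) [CommRing R]

/-- An `R`-module `M` has no nonzero free direct summand. (For a finitely generated module over a
local ring this is equivalent to the nonexistence of a surjective linear map `M → R`.) -/
def NoFreeSummand (M : Type u) [AddCommGroup M] [Module R M] : Prop :=
  ¬ ∃ f : M →ₗ[R] R, Function.Surjective f

variable (p : ℕ) [Fact p.Prime] [CharP R p]

/-- `a` is the number of `R`-free direct summands in a direct sum decomposition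
`R^{1/p^e} ≅ R^a ⊕ M` where `M` has no nonzero free direct summand. -/
def IsFreeSummandCount (e a : ℕ) : Prop :=
  ∃ (M : Type u) (_ : AddCommGroup M) (_ : Module R M),
    NoFreeSummand R M ∧ Nonempty (FrobTwist R p e ≃ₗ[R] ((Fin a → R) × M))

/-- `R` is strongly `F`-regular: for every `c` not in any minimal prime, the inclusion
`R·c^{1/q} ⊆ R^{1/q}` of `R`-modules splits for all `q = p^e` large. -/
def StronglyFRegular : Prop :=
  ∀ c : R, (∀ P ∈ minimalPrimes R, c ∉ P) →
    ∃ e₀ : ℕ, ∀ e ≥ e₀, ∃ g : FrobTwist R p e →ₗ[R] R, g (FrobTwist.of R p e c) = 1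

end Summands

section CharPInstances

theorem charP_of_ringHom_of_prime {R S : Type*} [CommRing R] [CommRing S] [Nontrivial S]
    (f : R →+* S) (p : ℕ) [hp : Fact p.Prime] [CharP R p] : CharP S p := by
  have hp0 : (p : S) = 0 := by
    rw [← map_natCast f p, CharP.cast_eq_zero R p, map_zero]
  refine ringChar.of_eq (Or.resolve_left ((Nat.dvd_prime hp.1).1 (ringChar.dvd hp0)) fun h1 => ?_)
  haveI := ringChar.of_eq h1
  haveI := CharP.CharOne.subsingleton (R := S)
  exact one_ne_zero (α := S) (Subsingleton.elim _ _)

instance (R : Type u) [CommRing R] [IsLocalRing R] (p : ℕ) [Fact p.Prime] [CharP R p] :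
    CharP (ResidueField R) p :=
  charP_of_ringHom_of_prime (residue R) p

instance (R : Type u) [CommRing R] (P : Ideal R) [P.IsPrime] (p : ℕ) [Fact p.Prime] [CharP R p] :
    CharP (Localization.AtPrime P) p :=
  charP_of_ringHom_of_prime (algebraMap R (Localization.AtPrime P)) p

end CharPInstances




section Length

/-- The length of an `R`-module `M`, as an element of `ℕ∞`: the supremum of lengths of chains
of submodules of `M`. -/
noncomputable def moduleLength (R M : Type*) [Ring R] [AddCommGroup M] [Module R M] : ℕ∞ :=
  WithBot.unbotD 0 (Order.krullDim (Submodule R M))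

end Length

section FrobPow

/-- The `q = p^e`-th Frobenius power `I^{[q]}` of an ideal `I`: the ideal generated by the
`p^e`-th powers of the elements of `I`. -/
def Ideal.frobPow {R : Type*} [CommRing R] (p e : ℕ) (I : Ideal R) : Ideal R :=
  Ideal.span ((· ^ p ^ e) '' (I : Set R))

end FrobPow

section Excellent

/-- An ideal is irreducible if it is not the intersection of two ideals strictly containing it;
equivalently, whenever it is written as an intersection of two ideals, it equals one of them. -/
def IsIrreducibleIdeal {A : Type*} [CommRing A] (I : Ideal A) : Prop :=
  ∀ J K : Ideal A, I = J ⊓ K → I = J ∨ I = K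

/-- A ring is catenary if any two saturated chains of prime ideals with the same endpoints
have the same length. -/
def Ring.IsCatenary (A : Type*) [CommRing A] : Prop :=
  ∀ c₁ c₂ : LTSeries (PrimeSpectrum A), c₁.head = c₂.head → c₁.last = c₂.last →
    (∀ i : Fin c₁.length, c₁.toFun i.castSucc ⋖ c₁.toFun i.succ) →
    (∀ i : Fin c₂.length, c₂.toFun i.castSucc ⋖ c₂.toFun i.succ) →
    c₁.length = c₂.length

/-- A (commutative, Noetherian) ring is regular local if it is a Noetherian local ring whose
maximal ideal (= the ideal of nonunits) is generated by `dim A` elements. -/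
def IsRegularLocalRing' (A : Type u) [CommRing A] : Prop :=
  IsNoetherianRing A ∧
    ∃ s : Finset A, (∀ x : A, x ∈ Ideal.span (s : Set A) ↔ x ∈ nonunits A) ∧
      (s.card : WithBot ℕ∞) = ringKrullDim A

/-- A ring is regular if it is Noetherian and all its localizations at primes are regular local
rings. -/
def IsRegularRing' (A : Type u) [CommRing A] : Prop :=
  IsNoetherianRing A ∧
    ∀ P : PrimeSpectrum A, IsRegularLocalRing' (Localization.AtPrime P.asIdeal)

/-- An algebra `A` over a field `k` is geometrically regular if `L ⊗[k] A` is a regular ring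
for every finite field extension `L` of `k`. -/
def Algebra.IsGeometricallyRegular (k A : Type u) [Field k] [CommRing A] [Algebra k A] : Prop :=
  ∀ (L : Type u) [Field L] [Algebra k L], Module.Finite k L →
    IsRegularRing' (TensorProduct k L A)

/-- The residue field `k(P)` of a prime `P`. -/
noncomputable abbrev primeResidueField {R : Type u} [CommRing R] (P : Ideal R) [P.IsPrime] :
    Type u :=
  ResidueField (Localization.AtPrime P)

/-- A Noetherian local ring is excellent if it is universally catenary, its formal fibers (the
fibers of the map to its completion) are geometrically regular, and every finitely generated
algebra over it has open regular locus (the J-2 condition). -/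
def IsExcellentLocalRing (R : Type u) [CommRing R] [IsLocalRing R] : Prop :=
  IsNoetherianRing R ∧
  (∀ (B : Type u) [CommRing B] [Algebra R B], Algebra.FiniteType R B → Ring.IsCatenary B) ∧
  (∀ (P : Ideal R) (hP : P.IsPrime),
    Algebra.IsGeometricallyRegular (primeResidueField P)
      (TensorProduct R (primeResidueField P) (AdicCompletion (maximalIdeal R) R))) ∧
  (∀ (B : Type u) [CommRing B] [Algebra R B], Algebra.FiniteType R B →
    IsOpen {Q : PrimeSpectrum B | IsRegularLocalRing' (Localization.AtPrime Q.asIdeal)})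

end Excellent

section CM

/-- A local ring is Cohen–Macaulay if some system of parameters (a family of `dim R` elements
generating an ideal whose radical is the maximal ideal) is a regular sequence. -/
def IsCohenMacaulayLocalRing (A : Type u) [CommRing A] [IsLocalRing A] : Prop :=
  ∃ xs : List A, RingTheory.Sequence.IsRegular A xs ∧
    (Ideal.ofList xs).radical = maximalIdeal A ∧
    (xs.length : WithBot ℕ∞) = ringKrullDim A

/-- A local ring is Gorenstein if it is Cohen–Macaulay and some system of parameters generates
an irreducible ideal. -/
def IsGorensteinLocalRing (A : Type u) [CommRing A] [IsLocalRing A] : Prop :=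
  ∃ xs : List A, RingTheory.Sequence.IsRegular A xs ∧
    (Ideal.ofList xs).radical = maximalIdeal A ∧
    (xs.length : WithBot ℕ∞) = ringKrullDim A ∧
    IsIrreducibleIdeal (Ideal.ofList xs)

/-- A Noetherian local ring is approximately Gorenstein if there is a sequence of `m`-primary
irreducible ideals cofinal with the powers of the maximal ideal. -/
def IsApproximatelyGorenstein (R : Type u) [CommRing R] [IsLocalRing R] : Prop :=
  ∃ I : ℕ → Ideal R,
    (∀ t, (I t).radical = maximalIdeal R ∧ IsIrreducibleIdeal (I t)) ∧
    ∀ n : ℕ, ∃ t₀, ∀ t ≥ t₀, I t ≤ maximalIdeal R ^ n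

end CM

section TightClosure

/-- `x` lies in the tight closure of the ideal `I`: there is `c` not in any minimal prime with
`c x^q ∈ I^{[q]}` for all large `q = p^e`. -/
def Ideal.memTightClosure {R : Type u} [CommRing R] (p : ℕ) (I : Ideal R) (x : R) : Prop :=
  ∃ c : R, (∀ P ∈ minimalPrimes R, c ∉ P) ∧
    ∃ e₀ : ℕ, ∀ e ≥ e₀, c * x ^ p ^ e ∈ I.frobPow p e

/-- `R` is weakly `F`-regular: every ideal is tightly closed. -/
def WeaklyFRegular (R : Type u) [CommRing R] (p : ℕ) : Prop :=
  ∀ (I : Ideal R) (x : R), I.memTightClosure p x → x ∈ I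

end TightClosure

section Hull

/-- `ι : K →ₗ[R] E` exhibits `E` as an injective hull of `K`: `E` is injective and `ι` is an
injective map with essential image. -/
def IsInjectiveHull (R : Type u) [CommRing R] {K E : Type u}
    [AddCommGroup K] [Module R K] [AddCommGroup E] [Module R E] (ι : K →ₗ[R] E) : Prop :=
  Module.Injective R E ∧ Function.Injective ι ∧
    ∀ N : Submodule R E, N ≠ ⊥ → N ⊓ LinearMap.range ι ≠ ⊥

end Hull


section PDegree

/-- The degree `[k : k^p]` of the residue field of a local ring `R` over its subfield of `p`-th
powers, computed as the rank of `k^{1/p}` over `k`;  `α(R) = log_p [k : k^p]`. -/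
noncomputable def residueFieldPDegree (R : Type u) [CommRing R] [IsLocalRing R] (p : ℕ)
    [Fact p.Prime] [CharP R p] : ℕ :=
  Module.finrank (ResidueField R) (FrobTwist (ResidueField R) p 1)

end PDegree



open Submodule



namespace HochsterAux

variable {R : Type*} [Ring R]

section CovTransfer

variable {M : Type*} [AddCommGroup M] [Module R M]

theorem covBy_map_subtype (N : Submodule R M) {x y : Submodule R ↥N} (h : x ⋖ y) :
    Submodule.map N.subtype x ⋖ Submodule.map N.subtype y := by
  have hinj : Function.Injective N.subtype := Subtype.coe_injective
  constructor
  · rcases lt_iff_le_and_ne.1 h.lt with ⟨hle, hne⟩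
    refine lt_iff_le_and_ne.2 ⟨Submodule.map_mono hle, fun he => hne ?_⟩
    exact Submodule.map_injective_of_injective hinj he
  · intro W h1 h2
    have hWN : W ≤ N := le_trans h2.le (by
      rw [Submodule.map_le_iff_le_comap]; intro z _; exact z.2)
    have hmc : Submodule.map N.subtype (Submodule.comap N.subtype W) = W := by
      rw [Submodule.map_comap_subtype]; exact inf_eq_right.2 hWN
    have hlt1 : x < Submodule.comap N.subtype W := by
      refine lt_iff_le_and_ne.2 ⟨?_, fun he => h1.ne ?_⟩
      · rw [← Submodule.comap_map_eq_of_injective hinj x]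
        exact Submodule.comap_mono h1.le
      · rw [he, hmc]
    have hlt2 : Submodule.comap N.subtype W < y := by
      refine lt_iff_le_and_ne.2 ⟨?_, fun he => h2.ne ?_⟩
      · rw [← Submodule.comap_map_eq_of_injective hinj y]
        exact Submodule.comap_mono h2.le
      · rw [← hmc, he]
    exact h.2 hlt1 hlt2

theorem covBy_comap_mkQ (N : Submodule R M) {x y : Submodule R (M ⧸ N)} (h : x ⋖ y) :
    Submodule.comap N.mkQ x ⋖ Submodule.comap N.mkQ y := by
  have hsur : Function.Surjective N.mkQ := N.mkQ_surjective
  have hcm : ∀ z : Submodule R (M ⧸ N), Submodule.map N.mkQ (Submodule.comap N.mkQ z) = z :=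
    fun z => Submodule.map_comap_eq_of_surjective hsur z
  constructor
  · refine lt_iff_le_and_ne.2 ⟨Submodule.comap_mono h.lt.le, fun he => h.lt.ne ?_⟩
    rw [← hcm x, ← hcm y, he]
  · intro W h1 h2
    have hNx : N ≤ Submodule.comap N.mkQ x := by
      have h' : Submodule.comap N.mkQ ⊥ ≤ Submodule.comap N.mkQ x := Submodule.comap_mono bot_le
      rwa [Submodule.comap_bot, Submodule.ker_mkQ] at h' 
    have hNW : N ≤ W := le_trans hNx h1.le
    have hmc : Submodule.comap N.mkQ (Submodule.map N.mkQ W) = W := by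
      rw [Submodule.comap_map_mkQ]; exact sup_eq_right.2 hNW
    have hlt1 : x < Submodule.map N.mkQ W := by
      refine lt_iff_le_and_ne.2 ⟨?_, fun he => h1.ne ?_⟩
      · rw [← hcm x]; exact Submodule.map_mono h1.le
      · rw [he, hmc]
    have hlt2 : Submodule.map N.mkQ W < y := by
      refine lt_iff_le_and_ne.2 ⟨?_, fun he => h2.ne ?_⟩
      · rw [← hcm y]; exact Submodule.map_mono h2.le
      · rw [← he, hmc]
    exact h.2 hlt1 hlt2

end CovTransfer

section Flen

variable (R)

noncomputable def flen (M : Type*) [AddCommGroup M] [Module R M] [IsNoetherian R M]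
    [IsArtinian R M] : ℕ :=
  (exists_compositionSeries_of_isNoetherian_isArtinian R M).choose.length

variable {M N : Type*} [AddCommGroup M] [Module R M] [AddCommGroup N] [Module R N]

theorem flen_eq [IsNoetherian R M] [IsArtinian R M] (s : CompositionSeries (Submodule R M))
    (h0 : s.head = ⊥) (h1 : s.last = ⊤) : s.length = flen R M := by
  obtain ⟨hh, hl⟩ := (exists_compositionSeries_of_isNoetherian_isArtinian R M).choose_spec
  exact CompositionSeries.Equivalent.length_eq
    (CompositionSeries.jordan_holder _ _ (h0.trans hh.symm) (h1.trans hl.symm))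

theorem flen_congr [IsNoetherian R M] [IsArtinian R M] [IsNoetherian R N] [IsArtinian R N]
    (e : M ≃ₗ[R] N) :
    flen R M = flen R N := by
  obtain ⟨s, h0, h1⟩ := exists_compositionSeries_of_isNoetherian_isArtinian R M
  have heq := flen_eq R s h0 h1
  let f : Submodule R M ≃o Submodule R N := Submodule.orderIsoMapComap e
  let s' : CompositionSeries (Submodule R N) :=
    ⟨s.length, fun i => f (s i), fun i => (apply_covBy_apply_iff f).2 (s.step i)⟩
  have h0' : s'.head = ⊥ := by
    show f s.head = ⊥
    rw [h0]; exact map_bot f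
  have h1' : s'.last = ⊤ := by
    show f s.last = ⊤
    rw [h1]; exact map_top f
  rw [← heq, ← flen_eq R s' h0' h1']

theorem flen_add [IsNoetherian R M] [IsArtinian R M] (N : Submodule R M) :
    flen R ↥N + flen R (M ⧸ N) = flen R M := by
  obtain ⟨s, hs0, hs1⟩ := exists_compositionSeries_of_isNoetherian_isArtinian R ↥N
  obtain ⟨t, ht0, ht1⟩ := exists_compositionSeries_of_isNoetherian_isArtinian R (M ⧸ N)
  let s' : CompositionSeries (Submodule R M) :=
    ⟨s.length, fun i => Submodule.map N.subtype (s i), fun i => covBy_map_subtype N (s.step i)⟩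
  let t' : CompositionSeries (Submodule R M) :=
    ⟨t.length, fun i => Submodule.comap N.mkQ (t i), fun i => covBy_comap_mkQ N (t.step i)⟩
  have hconn : s'.last = t'.head := by
    show Submodule.map N.subtype s.last = Submodule.comap N.mkQ t.head
    rw [hs1, ht0, Submodule.comap_bot, Submodule.ker_mkQ, Submodule.map_subtype_top]
  have h0 : (s'.smash t' hconn).head = ⊥ := by
    rw [RelSeries.head_smash]
    show Submodule.map N.subtype s.head = ⊥
    rw [hs0, Submodule.map_bot]
  have h1 : (s'.smash t' hconn).last = ⊤ := by
    rw [RelSeries.last_smash]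
    show Submodule.comap N.mkQ t.last = ⊤
    rw [ht1, Submodule.comap_top]
  have hlen := flen_eq R (s'.smash t' hconn) h0 h1
  have : (s'.smash t' hconn).length = s.length + t.length := rfl
  rw [this] at hlen
  rw [← hlen, flen_eq R s hs0 hs1, flen_eq R t ht0 ht1]

theorem flen_zero_iff [IsNoetherian R M] [IsArtinian R M] :
    flen R M = 0 ↔ Subsingleton M := by
  obtain ⟨s, h0, h1⟩ := exists_compositionSeries_of_isNoetherian_isArtinian R M
  constructor
  · intro h
    rw [← flen_eq R s h0 h1] at h
    have hf : Fin.last s.length = 0 := by ext; simp [h]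
    have : s.head = s.last := by
      show s.toFun 0 = s.toFun (Fin.last s.length)
      rw [hf]
    rw [h0, h1] at this
    have hbt : (⊥ : Submodule R M) = ⊤ := this
    constructor
    intro a b
    have ha : a ∈ (⊥ : Submodule R M) := by rw [hbt]; trivial
    have hb : b ∈ (⊥ : Submodule R M) := by rw [hbt]; trivial
    rw [Submodule.mem_bot] at ha hb
    rw [ha, hb]
  · intro h
    have : (⊥ : Submodule R M) = ⊤ := Subsingleton.elim _ _
    have hs : ∀ i, s.toFun i = ⊥ := fun i => Subsingleton.elim _ _
    rcases Nat.eq_zero_or_pos s.length with h' | h'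
    · rw [← flen_eq R s h0 h1]; exact h'
    · exfalso
      have := s.step ⟨0, h'⟩
      exact this.lt.ne (by rw [hs, hs])

theorem flen_quot_zero [IsNoetherian R M] [IsArtinian R M] {N P : Submodule R M} (h : N ≤ P)
    (hq : flen R (↥P ⧸ Submodule.comap P.subtype N) = 0) : P ≤ N := by
  have := (flen_zero_iff R).1 hq
  have hT : Submodule.comap P.subtype N = ⊤ := Submodule.Quotient.subsingleton_iff.1 this
  intro x hx
  have : (⟨x, hx⟩ : ↥P) ∈ Submodule.comap P.subtype N := by rw [hT]; trivial
  exact this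

theorem flen_add_of_le [IsNoetherian R M] [IsArtinian R M] {N P : Submodule R M} (h : N ≤ P) :
    flen R ↥N + flen R (↥P ⧸ Submodule.comap P.subtype N) = flen R ↥P := by
  have := flen_add R (Submodule.comap P.subtype N)
  rwa [flen_congr R (Submodule.comapSubtypeEquivOfLe h)] at this

theorem flen_mono [IsNoetherian R M] [IsArtinian R M] {N P : Submodule R M} (h : N ≤ P) :
    flen R ↥N ≤ flen R ↥P := by
  have := flen_add_of_le R h
  omega

theorem eq_of_le_of_flen_le [IsNoetherian R M] [IsArtinian R M] {N P : Submodule R M}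
    (h : N ≤ P) (hf : flen R ↥P ≤ flen R ↥N) : N = P := by
  have hadd := flen_add_of_le R h
  refine le_antisymm h (flen_quot_zero R h ?_)
  omega

theorem flen_lt_of_lt [IsNoetherian R M] [IsArtinian R M] {N P : Submodule R M} (h : N < P) :
    flen R ↥N < flen R ↥P := by
  rcases Nat.lt_or_ge (flen R ↥N) (flen R ↥P) with h' | h'
  · exact h'
  · exact absurd (eq_of_le_of_flen_le R h.le h') h.ne

theorem flen_sup_add_inf [IsNoetherian R M] [IsArtinian R M] (X Y : Submodule R M) :
    flen R ↥(X ⊔ Y) + flen R ↥(X ⊓ Y) = flen R ↥X + flen R ↥Y := by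
  have h1 : flen R ↥Y + flen R (↥(X ⊔ Y) ⧸ Submodule.comap (X ⊔ Y).subtype Y) =
      flen R ↥(X ⊔ Y) := flen_add_of_le R le_sup_right
  have h2 : flen R ↥(X ⊓ Y) + flen R (↥X ⧸ Submodule.comap X.subtype (X ⊓ Y)) =
      flen R ↥X := flen_add_of_le R inf_le_left
  have h3 : flen R (↥X ⧸ Submodule.comap X.subtype (X ⊓ Y)) =
      flen R (↥(X ⊔ Y) ⧸ Submodule.comap (X ⊔ Y).subtype Y) :=
    flen_congr R (LinearMap.quotientInfEquivSupQuotient X Y)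
  omega

theorem flen_ker_add_range [IsNoetherian R M] [IsArtinian R M] [IsNoetherian R N] [IsArtinian R N]
    (φ : M →ₗ[R] N) :
    flen R ↥(LinearMap.ker φ) + flen R ↥(LinearMap.range φ) = flen R M := by
  have h1 := flen_add R (LinearMap.ker φ)
  have h2 : flen R (M ⧸ LinearMap.ker φ) = flen R ↥(LinearMap.range φ) :=
    flen_congr R (LinearMap.quotKerEquivRange φ)
  omega

theorem flen_le_one [IsNoetherian R M] [IsArtinian R M]
    (h : ∀ W : Submodule R M, W = ⊥ ∨ W = ⊤) : flen R M ≤ 1 := by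
  by_contra h'
  push_neg at h'
  obtain ⟨s, h0, h1⟩ := exists_compositionSeries_of_isNoetherian_isArtinian R M
  rw [← flen_eq R s h0 h1] at h'
  have l0 : 0 < s.length := by omega
  have l1 : 1 < s.length := h'
  have st0 := s.step ⟨0, l0⟩
  have st1 := s.step ⟨1, l1⟩
  have hc0 : (⟨0, l0⟩ : Fin s.length).castSucc = (0 : Fin (s.length + 1)) := by
    ext; simp
  have hh : s.toFun (⟨0, l0⟩ : Fin s.length).castSucc = ⊥ := by rw [hc0]; exact h0
  have hs1 : s.toFun (⟨0, l0⟩ : Fin s.length).succ ≠ ⊥ := by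
    intro hb
    have := st0.lt
    rw [hh, hb] at this
    exact lt_irrefl _ this
  have heq : (⟨0, l0⟩ : Fin s.length).succ = (⟨1, l1⟩ : Fin s.length).castSucc := by
    ext; simp
  have hs1t : s.toFun (⟨1, l1⟩ : Fin s.length).castSucc = ⊤ := by
    rcases h (s.toFun (⟨1, l1⟩ : Fin s.length).castSucc) with hb | ht
    · exact absurd (heq ▸ hb) hs1
    · exact ht
  have := st1.lt
  rw [hs1t] at this
  exact not_top_lt this

theorem flen_pos_of_nontrivial [IsNoetherian R M] [IsArtinian R M] [Nontrivial M] :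
    0 < flen R M := by
  rcases Nat.eq_zero_or_pos (flen R M) with h | h
  · have hs := (flen_zero_iff R).1 h
    obtain ⟨a, b, hab⟩ := exists_pair_ne M
    exact absurd (Subsingleton.elim a b) hab
  · exact h

end Flen

end HochsterAux

namespace HochsterAux

section Gorenstein

open Submodule IsLocalRing

variable {A : Type u} [CommRing A] [IsNoetherianRing A] [IsArtinianRing A] [IsLocalRing A]

local notation "m" => IsLocalRing.maximalIdeal A

/-- irreducibility of the zero ideal -/
def ZeroIrred (A : Type u) [CommRing A] : Prop :=
  ∀ J K : Ideal A, J ⊓ K = ⊥ → J = ⊥ ∨ K = ⊥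

theorem ann_antitone {I J : Ideal A} (h : I ≤ J) :
    (J : Submodule A A).annihilator ≤ (I : Submodule A A).annihilator := by
  intro a ha
  rw [Submodule.mem_annihilator] at ha ⊢
  exact fun n hn => ha n (h hn)

theorem ann_top : (⊤ : Submodule A A).annihilator = ⊥ := by
  ext a
  rw [Submodule.mem_annihilator]
  constructor
  · intro h
    have := h 1 trivial
    rwa [smul_eq_mul, mul_one, ← Submodule.mem_bot A] at this
  · intro h n _
    rw [Submodule.mem_bot] at h
    rw [h, zero_smul]

theorem ann_sup (I J : Ideal A) :
    ((I ⊔ J : Ideal A) : Submodule A A).annihilator =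
      (I : Submodule A A).annihilator ⊓ (J : Submodule A A).annihilator := by
  apply le_antisymm
  · exact le_inf (ann_antitone le_sup_left) (ann_antitone le_sup_right)
  · intro a ha
    rw [Submodule.mem_inf] at ha
    rw [Submodule.mem_annihilator]
    intro n hn
    obtain ⟨x, hx, y, hy, rfl⟩ := Submodule.mem_sup.1 hn
    rw [smul_add, Submodule.mem_annihilator.1 ha.1 x hx, Submodule.mem_annihilator.1 ha.2 y hy,
      add_zero]

theorem le_ann_ann (I : Ideal A) :
    I ≤ ((I : Submodule A A).annihilator : Submodule A A).annihilator := by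
  intro x hx
  rw [Submodule.mem_annihilator]
  intro n hn
  rw [smul_eq_mul, mul_comm, ← smul_eq_mul]
  exact Submodule.mem_annihilator.1 hn x hx

theorem flen_top_ideal : flen A ↥(⊤ : Ideal A) = flen A A :=
  flen_congr A (Submodule.topEquiv)

theorem flen_bot_ideal : flen A ↥(⊥ : Ideal A) = 0 := by
  rw [flen_zero_iff]
  constructor
  rintro ⟨a, ha⟩ ⟨b, hb⟩
  rw [Submodule.mem_bot] at ha hb
  apply Subtype.ext
  show a = b
  rw [ha, hb]

/-- socle classification: any nonzero element of the socle spans it. -/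
theorem span_eq_soc (hirr : ZeroIrred A) {z : A} (hz : z ∈ (m : Submodule A A).annihilator)
    (hz0 : z ≠ 0) : Ideal.span {z} = (m : Submodule A A).annihilator := by
  have key : ∀ w : A, w ∈ (m : Submodule A A).annihilator → w ≠ 0 →
      ∀ v ∈ Ideal.span {w}, v ≠ 0 → Ideal.span {v} = Ideal.span {w} := by
    intro w hw hw0 v hv hv0
    obtain ⟨c, hc⟩ := Ideal.mem_span_singleton'.1 hv
    have hcm : c ∉ m := by
      intro hcm
      apply hv0
      rw [← hc, mul_comm, ← smul_eq_mul]
      exact Submodule.mem_annihilator.1 hw c hcm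
    have hcu : IsUnit c := by
      by_contra hne
      exact hcm hne
    obtain ⟨u, rfl⟩ := hcu
    apply le_antisymm
    · rw [Ideal.span_le, Set.singleton_subset_iff, ← hc]
      exact Ideal.mul_mem_left _ _ (Ideal.subset_span rfl)
    · rw [Ideal.span_le, Set.singleton_subset_iff]
      have : (↑u⁻¹ : A) * v ∈ Ideal.span {v} := Ideal.mul_mem_left _ _ (Ideal.subset_span rfl)
      have hw' : (↑u⁻¹ : A) * v = w := by
        rw [← hc, ← mul_assoc, Units.inv_mul, one_mul]
      rwa [hw'] at this
  apply le_antisymm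
  · rw [Ideal.span_le, Set.singleton_subset_iff]; exact hz
  · intro w hw
    by_cases hw0 : w = 0
    · rw [hw0]; exact zero_mem _
    · by_cases hb : Ideal.span {z} ⊓ Ideal.span {w} = ⊥
      · rcases hirr (Ideal.span {z}) (Ideal.span {w}) hb with h' | h'
        · exact absurd (Ideal.span_singleton_eq_bot.1 h') hz0
        · exact absurd (Ideal.span_singleton_eq_bot.1 h') hw0
      · obtain ⟨v, hv, hv0⟩ := (Submodule.ne_bot_iff _).1 hb
        rw [Submodule.mem_inf] at hv
        have e1 := key z hz hz0 v hv.1 hv0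
        have e2 := key w hw hw0 v hv.2 hv0
        rw [← e1, e2]
        exact Ideal.subset_span rfl
theorem flen_soc_le_one (hirr : ZeroIrred A) :
    flen A ↥((m : Submodule A A).annihilator) ≤ 1 := by
  set soc := (m : Submodule A A).annihilator with hsoc
  by_cases h0 : soc = ⊥
  · rw [h0]
    have := flen_bot_ideal (A := A)
    omega
  · -- every nonzero subideal of soc equals soc
    have hcl : ∀ W : Ideal A, W ≤ soc → W ≠ ⊥ → W = soc := by
      intro W hWs hW0
      obtain ⟨v, hvW, hv0⟩ := (Submodule.ne_bot_iff _).1 hW0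
      have hspan := span_eq_soc hirr (hWs hvW) hv0
      apply le_antisymm hWs
      rw [hsoc, ← hspan, Ideal.span_le, Set.singleton_subset_iff]
      exact hvW
    apply flen_le_one
    intro W'
    set W : Ideal A := Submodule.map soc.subtype W' with hW
    by_cases hWb : W = ⊥
    · left
      rw [eq_bot_iff]
      intro x hx
      have : (x : A) ∈ W := Submodule.mem_map_of_mem hx
      rw [hWb, Submodule.mem_bot] at this
      rw [Submodule.mem_bot]
      exact Subtype.ext this
    · right
      have hWsoc : W = soc := by
        apply hcl
        · rw [hW, Submodule.map_le_iff_le_comap]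
          intro x _
          exact x.2
        · exact hWb
      rw [eq_top_iff]
      intro x _
      have : (x : A) ∈ W := by rw [hWsoc]; exact x.2
      obtain ⟨y, hy, hyx⟩ := this
      have : y = x := Subtype.ext hyx
      rwa [← this]

/-- upper bound for annihilator length -/
theorem lenU (hirr : ZeroIrred A) (I : Ideal A) :
    flen A ↥((I : Submodule A A).annihilator) + flen A ↥I ≤ flen A A := by
  have hbd : ∀ J : Ideal A, flen A ↥J ≤ flen A A := by
    intro J
    calc flen A ↥J ≤ flen A ↥(⊤ : Ideal A) := flen_mono A le_top
    _ = flen A A := flen_top_ideal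
  suffices H : ∀ d : ℕ, ∀ I : Ideal A, flen A A - flen A ↥I ≤ d →
      flen A ↥((I : Submodule A A).annihilator) + flen A ↥I ≤ flen A A by
    exact H (flen A A) I (by omega)
  intro d
  induction d with
  | zero =>
    intro I hI
    have hIe : I = ⊤ := by
      apply eq_of_le_of_flen_le A le_top
      rw [flen_top_ideal]
      have := hbd I
      omega
    subst hIe
    rw [show ((⊤ : Ideal A) : Submodule A A) = ⊤ from rfl, ann_top, flen_bot_ideal,
      flen_top_ideal]
    omega
  | succ d ih =>
    intro I hI
    by_cases hIT : I = ⊤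
    · subst hIT
      rw [show ((⊤ : Ideal A) : Submodule A A) = ⊤ from rfl, ann_top, flen_bot_ideal,
        flen_top_ideal]
      omega
    -- find a cover C of I
    have hne : ({J : Ideal A | I < J}).Nonempty := ⟨⊤, lt_top_iff_ne_top.2 hIT⟩
    obtain ⟨C, hC, hmin⟩ := wellFounded_lt.has_min {J : Ideal A | I < J} hne
    have hcov : I ⋖ C := ⟨hC, fun J h1 h2 => hmin J h1 h2⟩
    obtain ⟨z, hzC, hzI⟩ := SetLike.exists_of_lt (show I < C from hC)
    -- m • C ≤ I
    have hmC : (m : Ideal A) • (C : Submodule A A) ≤ I := by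
      by_contra hcon
      have hlt : I < I ⊔ (m : Ideal A) • (C : Submodule A A) := by
        rcases lt_or_eq_of_le (le_sup_left : I ≤ I ⊔ (m : Ideal A) • (C : Submodule A A))
          with h | h
        · exact h
        · exfalso
          apply hcon
          rw [h]
          exact le_sup_right
      have hle : I ⊔ (m : Ideal A) • (C : Submodule A A) ≤ C := by
        apply sup_le hC.le
        have : (m : Ideal A) • (C : Submodule A A) ≤ C := by
          apply Submodule.smul_le.2
          intro r _ n hn
          exact Submodule.smul_mem _ _ hn
        exact this
      have heq : I ⊔ (m : Ideal A) • (C : Submodule A A) = C := by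
        rcases lt_or_eq_of_le hle with h | h
        · exact absurd h (hcov.2 hlt)
        · exact h
      -- Nakayama
      set N : Submodule A (A ⧸ (I : Submodule A A)) := Submodule.map (I : Submodule A A).mkQ C
        with hN
      have hNsm : N ≤ (m : Ideal A) • N := by
        have h2 : N = (m : Ideal A) • N := by
          conv_lhs => rw [hN, ← heq]
          rw [Submodule.map_sup, Submodule.map_smul'', Submodule.mkQ_map_self, bot_sup_eq, ← hN]
        exact le_of_eq h2
      have hjac : (m : Ideal A) ≤ (⊥ : Ideal A).jacobson := by
        rw [IsLocalRing.jacobson_eq_maximalIdeal (⊥ : Ideal A) bot_ne_top]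
      have hNbot := Submodule.eq_bot_of_le_smul_of_le_jacobson_bot (m : Ideal A) N
        (IsNoetherian.noetherian N) hNsm hjac
      -- contradiction: z ∈ C but z ∉ I
      have : (I : Submodule A A).mkQ z ∈ N := Submodule.mem_map_of_mem hzC
      rw [hNbot, Submodule.mem_bot, Submodule.mkQ_apply, Submodule.Quotient.mk_eq_zero] at this
      exact hzI this
    -- C = I ⊔ span z
    have hCspan : I ⊔ Ideal.span {z} = C := by
      have hle : I ⊔ Ideal.span {z} ≤ C := by
        apply sup_le hC.le
        rw [Ideal.span_le, Set.singleton_subset_iff]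
        exact hzC
      have hlt : I < I ⊔ Ideal.span {z} := by
        rcases lt_or_eq_of_le (le_sup_left : I ≤ I ⊔ Ideal.span {z}) with h | h
        · exact h
        · exfalso
          apply hzI
          rw [h]
          exact Submodule.mem_sup_right (Ideal.subset_span rfl)
      rcases lt_or_eq_of_le hle with h | h
      · exact absurd h (hcov.2 hlt)
      · exact h
    -- the evaluation map ann I → A, a ↦ a • z
    set ψ : ↥((I : Submodule A A).annihilator) →ₗ[A] A :=
      (LinearMap.toSpanSingleton A A z).comp
        (Submodule.subtype ((I : Submodule A A).annihilator)) with hψ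
    have hker : LinearMap.ker ψ =
        Submodule.comap (Submodule.subtype ((I : Submodule A A).annihilator))
          ((C : Submodule A A).annihilator) := by
      ext a
      simp only [LinearMap.mem_ker, Submodule.mem_comap, hψ, LinearMap.comp_apply,
        Submodule.subtype_apply, LinearMap.toSpanSingleton_apply]
      constructor
      · intro haz
        rw [Submodule.mem_annihilator]
        intro n hn
        rw [← hCspan] at hn
        obtain ⟨x, hx, y, hy, rfl⟩ := Submodule.mem_sup.1 hn
        obtain ⟨c, rfl⟩ := Ideal.mem_span_singleton'.1 hy
        have h1 : (a : A) • x = 0 := Submodule.mem_annihilator.1 a.2 x hx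
        rw [smul_eq_mul] at haz
        rw [smul_add, h1, zero_add, smul_eq_mul, mul_left_comm, haz, mul_zero]
      · intro hC'
        have : (a : A) • z = 0 := Submodule.mem_annihilator.1 hC' z hzC
        exact this
    have hrange : LinearMap.range ψ ≤ (m : Submodule A A).annihilator := by
      rintro _ ⟨a, rfl⟩
      simp only [hψ, LinearMap.comp_apply, Submodule.subtype_apply,
        LinearMap.toSpanSingleton_apply]
      rw [Submodule.mem_annihilator]
      intro n hn
      have hnz : n • z ∈ (I : Submodule A A) := hmC (Submodule.smul_mem_smul hn hzC)
      have hthis := Submodule.mem_annihilator.1 a.2 _ hnz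
      rw [smul_eq_mul, smul_eq_mul, mul_assoc, mul_comm z n]
      rw [smul_eq_mul, smul_eq_mul] at hthis
      exact hthis
    have hk1 := flen_ker_add_range A ψ
    have hk2 : flen A ↥(LinearMap.ker ψ) = flen A ↥((C : Submodule A A).annihilator) := by
      rw [hker]
      exact flen_congr A (Submodule.comapSubtypeEquivOfLe (ann_antitone hC.le))
    have hk3 : flen A ↥(LinearMap.range ψ) ≤ 1 :=
      le_trans (flen_mono A hrange) (flen_soc_le_one hirr)
    have hIC : flen A ↥I < flen A ↥C := flen_lt_of_lt A hC
    have hCbd := hbd C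
    have hann := ih C (by omega)
    omega

theorem ann_span_singleton (z : A) :
    ((Ideal.span {z} : Ideal A) : Submodule A A).annihilator =
      LinearMap.ker (LinearMap.toSpanSingleton A A z) := by
  ext a
  rw [Submodule.mem_annihilator, LinearMap.mem_ker, LinearMap.toSpanSingleton_apply]
  constructor
  · intro h
    exact h z (Ideal.subset_span rfl)
  · intro h n hn
    obtain ⟨c, rfl⟩ := Ideal.mem_span_singleton'.1 hn
    rw [smul_eq_mul] at h
    rw [smul_eq_mul, mul_left_comm, h, mul_zero]

theorem lenP (z : A) :
    flen A ↥(((Ideal.span {z} : Ideal A) : Submodule A A).annihilator) +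
      flen A ↥(Ideal.span {z} : Ideal A) = flen A A := by
  have h1 := flen_ker_add_range A (LinearMap.toSpanSingleton A A z)
  have h2 : (Ideal.span {z} : Ideal A) = LinearMap.range (LinearMap.toSpanSingleton A A z) := by
    rw [← LinearMap.span_singleton_eq_range]
  rw [ann_span_singleton]
  rw [h2] at *
  exact h1

theorem lenD (hirr : ZeroIrred A) (I : Ideal A) :
    flen A ↥((I : Submodule A A).annihilator) + flen A ↥I = flen A A := by
  refine le_antisymm (lenU hirr I) ?_
  have : ∀ I : Ideal A, I.FG → flen A A ≤ flen A ↥((I : Submodule A A).annihilator) + flen A ↥I := by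
    apply Submodule.fg_induction
      (motive := fun I _ => flen A A ≤ flen A ↥((I : Submodule A A).annihilator) + flen A ↥I)
    · intro z
      have := lenP (A := A) z
      have h2 : Submodule.span A {z} = Ideal.span {z} := rfl
      rw [h2]
      omega
    · intro M N _ _ hM hN
      have a1 : ((M ⊔ N : Ideal A) : Submodule A A).annihilator =
          (M : Submodule A A).annihilator ⊓ (N : Submodule A A).annihilator := ann_sup M N
      have a2 : (M : Submodule A A).annihilator ⊔ (N : Submodule A A).annihilator ≤
          ((M ⊓ N : Ideal A) : Submodule A A).annihilator := by
        apply sup_le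
        · exact ann_antitone inf_le_left
        · exact ann_antitone inf_le_right
      have a3 := lenU hirr (M ⊓ N)
      have a4 := flen_mono A a2
      have a5 := flen_sup_add_inf A (M : Submodule A A).annihilator
        (N : Submodule A A).annihilator
      have a6 := flen_sup_add_inf A (M : Submodule A A) (N : Submodule A A)
      rw [a1]
      omega
  exact this I (IsNoetherian.noetherian I)

theorem ann_ann (hirr : ZeroIrred A) (I : Ideal A) :
    (((I : Submodule A A).annihilator : Submodule A A)).annihilator = I := by
  have h1 := lenD hirr I
  have h2 := lenD hirr ((I : Submodule A A).annihilator)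
  refine (eq_of_le_of_flen_le A (le_ann_ann I) ?_).symm
  omega

theorem ann_inf (hirr : ZeroIrred A) (M N : Ideal A) :
    ((M ⊓ N : Ideal A) : Submodule A A).annihilator =
      (M : Submodule A A).annihilator ⊔ (N : Submodule A A).annihilator := by
  have a2 : (M : Submodule A A).annihilator ⊔ (N : Submodule A A).annihilator ≤
      ((M ⊓ N : Ideal A) : Submodule A A).annihilator := by
    apply sup_le
    · exact ann_antitone inf_le_left
    · exact ann_antitone inf_le_right
  refine (eq_of_le_of_flen_le A a2 ?_).symm
  have a1 : ((M ⊔ N : Ideal A) : Submodule A A).annihilator =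
      (M : Submodule A A).annihilator ⊓ (N : Submodule A A).annihilator := ann_sup M N
  have a5 := flen_sup_add_inf A (M : Submodule A A).annihilator (N : Submodule A A).annihilator
  have a6 := flen_sup_add_inf A (M : Submodule A A) (N : Submodule A A)
  have d1 := lenD hirr M
  have d2 := lenD hirr N
  have d3 := lenD hirr (M ⊓ N)
  have d4 := lenD hirr (M ⊔ N)
  rw [a1] at d4
  omega

theorem mem_span_of_ann_le (hirr : ZeroIrred A) {z y : A}
    (h : ((Ideal.span {z} : Ideal A) : Submodule A A).annihilator ≤
      ((Ideal.span {y} : Ideal A) : Submodule A A).annihilator) :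
    y ∈ (Ideal.span {z} : Ideal A) := by
  have := ann_antitone h
  rw [ann_ann hirr, ann_ann hirr] at this
  exact this (Ideal.subset_span rfl)

theorem baer_aux (hirr : ZeroIrred A) :
    ∀ I : Ideal A, ∀ φ : ↥I →ₗ[A] A, ∃ a : A, ∀ x : A, ∀ hx : x ∈ I, φ ⟨x, hx⟩ = a * x := by
  have main : ∀ I : Ideal A, I.FG →
      ∀ φ : ↥I →ₗ[A] A, ∃ a : A, ∀ x : A, ∀ hx : x ∈ I, φ ⟨x, hx⟩ = a * x := by
    apply Submodule.fg_induction
      (motive := fun I _ => ∀ φ : ↥I →ₗ[A] A, ∃ a : A, ∀ x : A, ∀ hx : x ∈ I, φ ⟨x, hx⟩ = a * x)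
    · intro z φ
      have hz : z ∈ Submodule.span A {z} := Submodule.mem_span_singleton_self z
      set y := φ ⟨z, hz⟩ with hy
      have hann : ((Ideal.span {z} : Ideal A) : Submodule A A).annihilator ≤
          ((Ideal.span {y} : Ideal A) : Submodule A A).annihilator := by
        intro r hr
        have hrz : r • z = 0 := Submodule.mem_annihilator.1 hr z (Ideal.subset_span rfl)
        have hry : r • y = 0 := by
          rw [hy, ← map_smul]
          have : r • (⟨z, hz⟩ : ↥(Submodule.span A {z})) = 0 := by
            apply Subtype.ext
            exact hrz
          rw [this, map_zero]
        rw [Submodule.mem_annihilator]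
        intro n hn
        obtain ⟨c, rfl⟩ := Ideal.mem_span_singleton'.1 hn
        rw [smul_eq_mul] at hry
        rw [smul_eq_mul, mul_left_comm, hry, mul_zero]
      have hyz := mem_span_of_ann_le hirr hann
      obtain ⟨a, ha⟩ := Ideal.mem_span_singleton'.1 hyz
      refine ⟨a, fun x hx => ?_⟩
      obtain ⟨c, rfl⟩ := Ideal.mem_span_singleton'.1 hx
      have : (⟨c * z, hx⟩ : ↥(Submodule.span A {z})) = c • ⟨z, hz⟩ := by
        apply Subtype.ext
        rw [SetLike.val_smul, smul_eq_mul]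
      rw [this, map_smul, ← hy, smul_eq_mul, ← ha]
      ring
    · intro M N _ _ hM hN φ
      obtain ⟨a, ha⟩ := hM (φ.comp (Submodule.inclusion le_sup_left))
      obtain ⟨b, hb⟩ := hN (φ.comp (Submodule.inclusion le_sup_right))
      have ha' : ∀ x : A, ∀ hx : x ∈ M, φ ⟨x, Submodule.mem_sup_left hx⟩ = a * x := by
        intro x hx
        have := ha x hx
        rwa [LinearMap.comp_apply] at this
      have hb' : ∀ x : A, ∀ hx : x ∈ N, φ ⟨x, Submodule.mem_sup_right hx⟩ = b * x := by
        intro x hx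
        have := hb x hx
        rwa [LinearMap.comp_apply] at this
      have hab : a - b ∈ ((M ⊓ N : Ideal A) : Submodule A A).annihilator := by
        rw [Submodule.mem_annihilator]
        intro n hn
        rw [Submodule.mem_inf] at hn
        have h1 := ha' n hn.1
        have h2 := hb' n hn.2
        have : φ ⟨n, Submodule.mem_sup_left hn.1⟩ = φ ⟨n, Submodule.mem_sup_right hn.2⟩ :=
          congrArg φ (Subtype.ext rfl)
        rw [smul_eq_mul, sub_mul]
        rw [← h1, ← h2, this, sub_self]
      rw [ann_inf hirr] at hab
      obtain ⟨u, hu, v, hv, huv⟩ := Submodule.mem_sup.1 hab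
      refine ⟨a - u, fun x hx => ?_⟩
      obtain ⟨xm, hxm, xn, hxn, rfl⟩ := Submodule.mem_sup.1 hx
      have hsplit : (⟨xm + xn, hx⟩ : ↥(M ⊔ N)) =
          (⟨xm, Submodule.mem_sup_left hxm⟩ : ↥(M ⊔ N)) + ⟨xn, Submodule.mem_sup_right hxn⟩ := by
        apply Subtype.ext
        rfl
      rw [hsplit, map_add, ha' xm hxm, hb' xn hxn]
      have hu0 : u * xm = 0 := by
        have := Submodule.mem_annihilator.1 hu xm hxm
        rwa [smul_eq_mul] at this
      have hv0 : v * xn = 0 := by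
        have := Submodule.mem_annihilator.1 hv xn hxn
        rwa [smul_eq_mul] at this
      have hc : a - u = b + v := by
        have : v = a - b - u := by
          rw [← huv]; ring
        rw [this]; ring
      calc a * xm + b * xn = (a - u) * xm + (b + v) * xn := by
            rw [sub_mul, add_mul, hu0, hv0]; ring
      _ = (a - u) * xm + (a - u) * xn := by rw [← hc]
      _ = (a - u) * (xm + xn) := by ring
  intro I φ
  exact main I (IsNoetherian.noetherian I) φ

theorem selfInjective (hirr : ZeroIrred A) : Module.Injective A A := by
  apply Module.Baer.injective
  intro I g
  obtain ⟨a, ha⟩ := baer_aux hirr I g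
  refine ⟨LinearMap.toSpanSingleton A A a, fun x hx => ?_⟩
  rw [LinearMap.toSpanSingleton_apply, ha x hx, smul_eq_mul, mul_comm]

end Gorenstein

section ArtinianTransfer

open Submodule

theorem isArtinian_of_torsion_module {A : Type*} [CommRing A] (J : Ideal A) [J.IsMaximal]
    {S : Type*} [AddCommGroup S] [Module A S] (hT : Module.IsTorsionBySet A S J)
    (hfg : Module.Finite A S) : IsArtinian A S := by
  letI : Module (A ⧸ J) S := hT.module
  letI : Field (A ⧸ J) := Ideal.Quotient.field J
  have hfin : Module.Finite (A ⧸ J) S := by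
    obtain ⟨T, hT'⟩ := hfg.fg_top
    refine ⟨⟨T, ?_⟩⟩
    rw [eq_top_iff]
    intro x _
    have hx : x ∈ Submodule.span A (T : Set S) := by rw [hT']; trivial
    refine Submodule.span_induction ?_ ?_ ?_ ?_ hx
    · intro y hy
      exact Submodule.subset_span hy
    · exact Submodule.zero_mem _
    · intro y z _ _ hy hz
      exact Submodule.add_mem _ hy hz
    · intro a y _ hy
      have : a • y = (Ideal.Quotient.mk J a) • y := (hT.mk_smul a y).symm
      rw [this]
      exact Submodule.smul_mem _ _ hy
  have hart : IsArtinian (A ⧸ J) S := isArtinian_of_fg_of_artinian'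
  let f : Submodule A S → Submodule (A ⧸ J) S := fun W =>
    { carrier := W
      add_mem' := fun ha hb => W.add_mem ha hb
      zero_mem' := W.zero_mem
      smul_mem' := by
        intro c x hx
        obtain ⟨r, rfl⟩ := Ideal.Quotient.mk_surjective c
        show (Ideal.Quotient.mk J r) • x ∈ W
        rw [hT.mk_smul]
        exact W.smul_mem r hx }
  have hf : StrictMono f := by
    intro W W' h
    refine lt_iff_le_and_ne.2 ⟨?_, ?_⟩
    · intro x hx
      exact h.le hx
    · intro he
      apply h.ne
      apply SetLike.ext'
      have : (f W : Set S) = (f W' : Set S) := by rw [he]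
      exact this
  exact hf.wellFoundedLT

variable {R : Type u} [CommRing R] [IsLocalRing R] [IsNoetherianRing R]

theorem map_maximalIdeal_quotient (I : Ideal R) (hI : I ≠ ⊤) :
    letI : Nontrivial (R ⧸ I) := Ideal.Quotient.nontrivial_iff.mpr hI
    letI : IsLocalRing (R ⧸ I) :=
      IsLocalRing.of_surjective' (Ideal.Quotient.mk I) Ideal.Quotient.mk_surjective
    Ideal.map (Ideal.Quotient.mk I) (IsLocalRing.maximalIdeal R) =
      IsLocalRing.maximalIdeal (R ⧸ I) := by
  letI : Nontrivial (R ⧸ I) := Ideal.Quotient.nontrivial_iff.mpr hI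
  letI : IsLocalRing (R ⧸ I) :=
    IsLocalRing.of_surjective' (Ideal.Quotient.mk I) Ideal.Quotient.mk_surjective
  have hIm : I ≤ IsLocalRing.maximalIdeal R := IsLocalRing.le_maximalIdeal hI
  apply le_antisymm
  · rw [Ideal.map_le_iff_le_comap]
    intro r hr
    show Ideal.Quotient.mk I r ∈ IsLocalRing.maximalIdeal (R ⧸ I)
    rw [IsLocalRing.mem_maximalIdeal]
    intro hu
    obtain ⟨⟨u, v, huv, hvu⟩, hu'⟩ := hu
    obtain ⟨s, rfl⟩ := Ideal.Quotient.mk_surjective v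
    have : Ideal.Quotient.mk I (r * s) = Ideal.Quotient.mk I 1 := by
      rw [map_mul, map_one, ← hu']
      exact huv
    rw [Ideal.Quotient.eq] at this
    have h1 : r * s - 1 ∈ IsLocalRing.maximalIdeal R := hIm this
    have h2 : r * s ∈ IsLocalRing.maximalIdeal R :=
      Ideal.mul_mem_right _ _ hr
    have : (1 : R) ∈ IsLocalRing.maximalIdeal R := by
      have := Submodule.sub_mem _ h2 h1
      simpa using this
    exact (IsLocalRing.maximalIdeal.isMaximal R).ne_top (Ideal.eq_top_of_isUnit_mem _ this isUnit_one)
  · intro x hx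
    obtain ⟨r, rfl⟩ := Ideal.Quotient.mk_surjective x
    by_cases hr : r ∈ IsLocalRing.maximalIdeal R
    · exact Ideal.mem_map_of_mem _ hr
    · exfalso
      rw [IsLocalRing.mem_maximalIdeal] at hx hr
      apply hx
      have : IsUnit r := by
        by_contra h
        exact hr h
      exact this.map (Ideal.Quotient.mk I)

theorem quotient_isArtinianRing (I : Ideal R) (hI : I ≠ ⊤) (n : ℕ)
    (hpow : IsLocalRing.maximalIdeal R ^ n ≤ I) : IsArtinianRing (R ⧸ I) := by
  letI : Nontrivial (R ⧸ I) := Ideal.Quotient.nontrivial_iff.mpr hI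
  letI : IsLocalRing (R ⧸ I) :=
    IsLocalRing.of_surjective' (Ideal.Quotient.mk I) Ideal.Quotient.mk_surjective
  set A := R ⧸ I
  set K : Ideal A := IsLocalRing.maximalIdeal A with hK
  have hKmap : Ideal.map (Ideal.Quotient.mk I) (IsLocalRing.maximalIdeal R) = K :=
    map_maximalIdeal_quotient I hI
  have hKn : K ^ n = ⊥ := by
    rw [← hKmap, ← Ideal.map_pow]
    rw [eq_bot_iff]
    calc Ideal.map (Ideal.Quotient.mk I) (IsLocalRing.maximalIdeal R ^ n)
        ≤ Ideal.map (Ideal.Quotient.mk I) I := Ideal.map_mono hpow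
      _ = ⊥ := by rw [Ideal.map_quotient_self]
  have claim : ∀ j : ℕ, IsArtinian A (A ⧸ (K ^ j : Ideal A)) := by
    intro j
    induction j with
    | zero =>
      have : (K ^ 0 : Ideal A) = ⊤ := by rw [pow_zero, Ideal.one_eq_top]
      rw [this]
      have hsub : Subsingleton (A ⧸ (⊤ : Ideal A)) :=
        Submodule.Quotient.subsingleton_iff.2 rfl
      haveI := hsub
      haveI : Finite (A ⧸ (⊤ : Ideal A)) := Finite.of_subsingleton
      exact isArtinian_of_finite
    | succ j ih =>
      set S : Submodule A (A ⧸ (K ^ (j + 1) : Ideal A)) :=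
        Submodule.map (K ^ (j + 1) : Ideal A).mkQ (K ^ j : Ideal A) with hS
      have hle : (K ^ (j + 1) : Ideal A) ≤ (K ^ j : Ideal A) :=
        Ideal.pow_le_pow_right (by omega)
      rw [isArtinian_iff_submodule_quotient S]
      constructor
      · -- S is a torsion module over A/K, fin dim vector space
        have hT : Module.IsTorsionBySet A ↥S (K : Set A) := by
          rintro ⟨x, hx⟩ ⟨r, hr⟩
          obtain ⟨y, hy, rfl⟩ := hx
          apply Subtype.ext
          show r • (K ^ (j + 1) : Ideal A).mkQ y = 0
          rw [← map_smul, Submodule.mkQ_apply, Submodule.Quotient.mk_eq_zero]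
          have : r • y = y * r := by rw [smul_eq_mul, mul_comm]
          rw [this, pow_succ]
          exact Ideal.mul_mem_mul hy hr
        haveI : (K : Ideal A).IsMaximal := IsLocalRing.maximalIdeal.isMaximal A
        have hfg : Module.Finite A ↥S := by
          rw [Module.Finite.iff_fg]
          exact IsNoetherian.noetherian S
        exact isArtinian_of_torsion_module K hT hfg
      · -- quotient is A / K^j
        have e := Submodule.quotientQuotientEquivQuotient
          (K ^ (j + 1) : Ideal A) (K ^ j : Ideal A) hle
        exact isArtinian_of_linearEquiv e.symm
  have := claim n
  rw [hKn] at this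
  exact isArtinian_of_linearEquiv (Submodule.quotEquivOfEqBot (⊥ : Ideal A) rfl)

end ArtinianTransfer

section Splitting

open Submodule

variable {R : Type u} [CommRing R] [IsLocalRing R] [IsNoetherianRing R]
variable {M : Type u} [AddCommGroup M] [Module R M]

theorem exists_splitting_mod (I : Ideal R) (hrad : I.radical = IsLocalRing.maximalIdeal R)
    (hirr : ∀ J K : Ideal R, I = J ⊓ K → I = J ∨ I = K) (f : R →ₗ[R] M)
    (hinj : ∀ x : R, f x ∈ I • (⊤ : Submodule R M) → x ∈ I) :
    ∃ h : M →ₗ[R] R ⧸ I, ∀ x : R, h (f x) = Ideal.Quotient.mk I x := by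
  have hmne : IsLocalRing.maximalIdeal R ≠ ⊤ := (IsLocalRing.maximalIdeal.isMaximal R).ne_top
  have hIne : I ≠ ⊤ := by
    intro h
    apply hmne
    rw [← hrad, h]
    exact eq_top_iff.2 (le_trans le_top Ideal.le_radical)
  letI : Nontrivial (R ⧸ I) := Ideal.Quotient.nontrivial_iff.mpr hIne
  letI : IsLocalRing (R ⧸ I) :=
    IsLocalRing.of_surjective' (Ideal.Quotient.mk I) Ideal.Quotient.mk_surjective
  obtain ⟨n, hpow⟩ := Ideal.exists_radical_pow_le_of_fg I (IsNoetherian.noetherian _)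
  rw [hrad] at hpow
  letI : IsArtinianRing (R ⧸ I) := quotient_isArtinianRing I hIne n hpow
  have hirrA : ZeroIrred (R ⧸ I) := by
    intro J K h
    have hcomap : I = Ideal.comap (Ideal.Quotient.mk I) J ⊓ Ideal.comap (Ideal.Quotient.mk I) K := by
      have h1 : Ideal.comap (Ideal.Quotient.mk I) (J ⊓ K) =
          Ideal.comap (Ideal.Quotient.mk I) J ⊓ Ideal.comap (Ideal.Quotient.mk I) K := rfl
      rw [← h1, h]
      ext x
      simp only [Ideal.mem_comap, Submodule.mem_bot]
      rw [← RingHom.mem_ker, Ideal.mk_ker]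
    rcases hirr _ _ hcomap with h' | h'
    · left
      have := Ideal.map_comap_of_surjective (Ideal.Quotient.mk I)
        Ideal.Quotient.mk_surjective J
      rw [← this, ← h', Ideal.map_quotient_self]
    · right
      have := Ideal.map_comap_of_surjective (Ideal.Quotient.mk I)
        Ideal.Quotient.mk_surjective K
      rw [← this, ← h', Ideal.map_quotient_self]
  have hinjA : Module.Injective (R ⧸ I) (R ⧸ I) := selfInjective hirrA
  -- the quotient module M / IM
  set Mb := M ⧸ (I • (⊤ : Submodule R M)) with hMb
  have hT : Module.IsTorsionBySet R Mb (I : Set R) := by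
    rintro x ⟨r, hr⟩
    obtain ⟨y, rfl⟩ := Submodule.Quotient.mk_surjective _ x
    show r • Submodule.Quotient.mk y = 0
    rw [← Submodule.Quotient.mk_smul, Submodule.Quotient.mk_eq_zero]
    exact Submodule.smul_mem_smul hr trivial
  letI modA : Module (R ⧸ I) Mb := hT.module
  letI towA : IsScalarTower R (R ⧸ I) Mb := hT.isScalarTower
  -- the map A → Mb
  set ι0 : R →ₗ[R] Mb := (I • (⊤ : Submodule R M)).mkQ.comp f with hι0
  have hker : (I : Submodule R R) ≤ LinearMap.ker ι0 := by
    intro x hx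
    rw [LinearMap.mem_ker, hι0, LinearMap.comp_apply, Submodule.mkQ_apply,
      Submodule.Quotient.mk_eq_zero]
    have : f x = x • f 1 := by
      rw [← map_smul, smul_eq_mul, mul_one]
    rw [this]
    exact Submodule.smul_mem_smul hx trivial
  set ιR : R ⧸ I →ₗ[R] Mb := Submodule.liftQ (I : Submodule R R) ι0 hker with hιR
  have hιR_mk : ∀ z : R, ιR (Ideal.Quotient.mk I z) = ι0 z := fun z => rfl
  set ι : (R ⧸ I) →ₗ[R ⧸ I] Mb :=
    { toFun := ιR
      map_add' := map_add ιR
      map_smul' := by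
        intro c x
        obtain ⟨r, rfl⟩ := Ideal.Quotient.mk_surjective c
        obtain ⟨y, rfl⟩ := Ideal.Quotient.mk_surjective x
        show ιR ((Ideal.Quotient.mk I r) • (Ideal.Quotient.mk I y)) =
          (Ideal.Quotient.mk I r) • ιR (Ideal.Quotient.mk I y)
        have h1 : (Ideal.Quotient.mk I r) • (Ideal.Quotient.mk I y) =
            Ideal.Quotient.mk I (r * y) := by
          rw [smul_eq_mul, ← map_mul]
        rw [h1, hιR_mk, hιR_mk]
        show ι0 (r * y) = (Ideal.Quotient.mk I r) • ι0 y
        rw [hT.mk_smul, ← smul_eq_mul, map_smul] } with hι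
  have hιinj : Function.Injective ι := by
    intro a b hab
    have : a - b = 0 → a = b := by
      intro h
      have := sub_eq_zero.1 h
      exact this
    apply this
    have hab0 : ι (a - b) = 0 := by rw [map_sub, hab, sub_self]
    obtain ⟨x, hx⟩ := Ideal.Quotient.mk_surjective (a - b)
    rw [← hx] at hab0 ⊢
    have hx2 : ι (Ideal.Quotient.mk I x) = ι0 x := hιR_mk x
    rw [hx2] at hab0
    rw [hι0, LinearMap.comp_apply, Submodule.mkQ_apply, Submodule.Quotient.mk_eq_zero] at hab0
    have := hinj x hab0
    rwa [Ideal.Quotient.eq_zero_iff_mem]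
  obtain ⟨hbar, hhbar⟩ := hinjA.out ι hιinj (LinearMap.id : (R ⧸ I) →ₗ[R ⧸ I] (R ⧸ I))
  refine ⟨(hbar.restrictScalars R).comp ((I • (⊤ : Submodule R M)).mkQ), fun x => ?_⟩
  have h1 : (I • (⊤ : Submodule R M)).mkQ (f x) = ι (Ideal.Quotient.mk I x) := (hιR_mk x).symm
  rw [LinearMap.comp_apply, h1]
  have := hhbar (Ideal.Quotient.mk I x)
  rw [LinearMap.id_apply] at this
  exact this

end Splitting

section Main

open Submodule IsLocalRing

theorem main_thm
    (R : Type u) [CommRing R] [IsLocalRing R] [IsNoetherianRing R]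
    (I : ℕ → Ideal R)
    (hprim : ∀ t, (I t).radical = maximalIdeal R)
    (hirr : ∀ t, ∀ J K : Ideal R, I t = J ⊓ K → I t = J ∨ I t = K)
    (hcof : ∀ n : ℕ, ∃ t₀, ∀ t ≥ t₀, I t ≤ maximalIdeal R ^ n)
    (M : Type u) [AddCommGroup M] [Module R M] [Module.Finite R M]
    (f : R →ₗ[R] M) :
    (∃ g : M →ₗ[R] R, g.comp f = LinearMap.id) ↔
      ∀ t, ∀ x : R, f x ∈ I t • (⊤ : Submodule R M) → x ∈ I t := by
  have hmne : maximalIdeal R ≠ ⊤ := (IsLocalRing.maximalIdeal.isMaximal R).ne_top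
  constructor
  · rintro ⟨g, hg⟩ t x hx
    have hgx : g (f x) = x := by
      have := congrArg (fun φ : R →ₗ[R] R => φ x) hg
      simpa using this
    have h1 : g (f x) ∈ Submodule.map g (I t • (⊤ : Submodule R M)) :=
      Submodule.mem_map_of_mem hx
    rw [Submodule.map_smul''] at h1
    have h2 : g (f x) ∈ I t • (⊤ : Submodule R R) :=
      Submodule.smul_mono le_rfl le_top h1
    rw [smul_eq_mul, Ideal.mul_top] at h2
    rwa [hgx] at h2
  · intro hq
    -- f is injective
    have hfinj : Function.Injective f := by
      have key : ∀ x : R, f x = 0 → x = 0 := by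
        intro x hx
        have hmem : ∀ n : ℕ, x ∈ maximalIdeal R ^ n := by
          intro n
          obtain ⟨t₀, ht⟩ := hcof n
          apply ht t₀ (le_refl _)
          apply hq t₀
          rw [hx]
          exact Submodule.zero_mem _
        have hbot := Ideal.iInf_pow_eq_bot_of_isLocalRing (maximalIdeal R) hmne
        have : x ∈ (⨅ i : ℕ, maximalIdeal R ^ i) := Submodule.mem_iInf _ |>.2 hmem
        rwa [hbot, Submodule.mem_bot] at this
      intro a b hab
      have : f (a - b) = 0 := by rw [map_sub, hab, sub_self]
      have := key _ this
      exact sub_eq_zero.1 this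
    -- presentation of N = coker f
    set N' := M ⧸ (LinearMap.range f) with hN'
    set p : M →ₗ[R] N' := (LinearMap.range f).mkQ with hp
    obtain ⟨n, sN, hsN⟩ := Module.Finite.exists_fin (R := R) (M := N')
    have hgN : ∀ i, ∃ y : M, p y = sN i := fun i => Submodule.mkQ_surjective _ (sN i)
    choose gN hgN using hgN
    set π : (Fin n → R) →ₗ[R] N' := Fintype.linearCombination R sN with hπ
    set α : (Fin n → R) →ₗ[R] M := Fintype.linearCombination R gN with hα
    have hπsurj : Function.Surjective π := by
      rw [← LinearMap.range_eq_top, hπ, Fintype.range_linearCombination, hsN]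
    have hpα : ∀ v : Fin n → R, p (α v) = π v := by
      intro v
      rw [hα, hπ, Fintype.linearCombination_apply, Fintype.linearCombination_apply, map_sum]
      congr 1
      ext i
      rw [map_smul, hgN]
    -- generators of the kernel
    set K := LinearMap.ker π with hKdef
    obtain ⟨m', k, hk⟩ := Submodule.fg_iff_exists_fin_generating_family.1
      (IsNoetherian.noetherian K)
    have hkK : ∀ j, k j ∈ K := by
      intro j
      rw [← hk]
      exact Submodule.subset_span ⟨j, rfl⟩
    have hbex : ∀ j, ∃ r : R, f r = α (k j) := by
      intro j
      have h1 : p (α (k j)) = 0 := by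
        rw [hpα]
        exact (LinearMap.mem_ker).1 (hkK j)
      rw [hp, Submodule.mkQ_apply, Submodule.Quotient.mk_eq_zero] at h1
      exact h1
    choose b hb using hbex
    -- the module of relations-compatible vectors
    set lc : (Fin m' → R) → ((Fin m' → R) →ₗ[R] R) := fun c => Fintype.linearCombination R c
      with hlc
    set Z : Submodule R (Fin m' → R) :=
      ⨅ c : ↥(LinearMap.ker (Fintype.linearCombination R k)), LinearMap.ker (lc c.val) with hZ
    have hZmem : ∀ w : Fin m' → R, w ∈ Z ↔
        ∀ c : Fin m' → R, (∑ j, c j • k j) = 0 → (∑ j, w j • c j) = 0 := by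
      intro w
      rw [hZ, Submodule.mem_iInf]
      constructor
      · intro h c hc
        have hcK : c ∈ LinearMap.ker (Fintype.linearCombination R k) := by
          rw [LinearMap.mem_ker, Fintype.linearCombination_apply]
          exact hc
        have := h ⟨c, hcK⟩
        rw [LinearMap.mem_ker, hlc, Fintype.linearCombination_apply] at this
        exact this
      · intro h c
        rw [LinearMap.mem_ker, hlc, Fintype.linearCombination_apply]
        apply h
        have := c.2
        rw [LinearMap.mem_ker, Fintype.linearCombination_apply] at this
        exact this
    have hbZ : b ∈ Z := by
      rw [hZmem]
      intro c hc
      have hsum : f (∑ j, b j • c j) = α (∑ j, c j • k j) := by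
        rw [map_sum, map_sum]
        congr 1
        ext j
        have h' : b j • c j = c j * b j := by rw [smul_eq_mul, mul_comm]
        rw [h', ← smul_eq_mul, map_smul, hb, ← map_smul]
      apply hfinj
      rw [hsum, hc, map_zero, map_zero]
    -- the values-on-generators map
    set T : ((Fin n → R) →ₗ[R] R) →ₗ[R] (Fin m' → R) :=
      LinearMap.pi (fun j => LinearMap.applyₗ (k j)) with hT
    have hTapp : ∀ (θ : (Fin n → R) →ₗ[R] R) (j : Fin m'), T θ j = θ (k j) := fun θ j => rfl
    set B : Submodule R (Fin m' → R) := LinearMap.range T with hB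
    have hBZ : B ≤ Z := by
      rintro w ⟨θ, rfl⟩
      rw [hZmem]
      intro c hc
      have : ∀ j, T θ j • c j = c j • θ (k j) := by
        intro j
        rw [hTapp, smul_eq_mul, smul_eq_mul, mul_comm]
      calc (∑ j, T θ j • c j) = ∑ j, c j • θ (k j) := by
            apply Finset.sum_congr rfl
            intro j _
            exact this j
      _ = θ (∑ j, c j • k j) := by
            rw [map_sum]
            apply Finset.sum_congr rfl
            intro j _
            rw [map_smul]
      _ = 0 := by rw [hc, map_zero]
    -- Artin-Rees constant
    obtain ⟨cAR, hAR⟩ := Ideal.exists_pow_inf_eq_pow_smul (maximalIdeal R) Z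
    -- b is in B + m^j • Z for every j
    have hstep : ∀ j : ℕ, b ∈ B ⊔ (maximalIdeal R ^ j • Z) := by
      intro j
      obtain ⟨t₀, ht⟩ := hcof (cAR + j)
      have hIt : I t₀ ≤ maximalIdeal R ^ (cAR + j) := ht t₀ (le_refl _)
      obtain ⟨ht', hht'⟩ := exists_splitting_mod (I t₀) (hprim t₀) (hirr t₀) f (hq t₀)
      -- lift h_t ∘ α to a map F0 → R
      have hrex : ∀ i : Fin n, ∃ r : R, Ideal.Quotient.mk (I t₀) r = ht' (gN i) :=
        fun i => Ideal.Quotient.mk_surjective _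
      choose rθ hrθ using hrex
      set θ : (Fin n → R) →ₗ[R] R := Fintype.linearCombination R rθ with hθdef
      have hθα : ∀ v : Fin n → R, Ideal.Quotient.mk (I t₀) (θ v) = ht' (α v) := by
        intro v
        rw [hθdef, hα, Fintype.linearCombination_apply, Fintype.linearCombination_apply,
          map_sum, map_sum]
        apply Finset.sum_congr rfl
        intro i _
        have h1 : Ideal.Quotient.mk (I t₀) (v i • rθ i) =
            v i • Ideal.Quotient.mk (I t₀) (rθ i) :=
          Submodule.Quotient.mk_smul _ (v i) (rθ i)
        rw [h1, hrθ, ← map_smul]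
      have hdiff : ∀ j' : Fin m', (b - T θ) j' ∈ I t₀ := by
        intro j'
        have h1 : Ideal.Quotient.mk (I t₀) (θ (k j')) = ht' (α (k j')) := hθα (k j')
        rw [← hb j'] at h1
        rw [hht' (b j')] at h1
        have : Ideal.Quotient.mk (I t₀) ((b - T θ) j') = 0 := by
          have hsub : (b - T θ) j' = b j' - θ (k j') := by
            rw [Pi.sub_apply, hTapp]
          rw [hsub, map_sub, h1, sub_self]
        rwa [Ideal.Quotient.eq_zero_iff_mem] at this
      have hmem1 : b - T θ ∈ (maximalIdeal R ^ (cAR + j)) • (⊤ : Submodule R (Fin m' → R)) := by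
        have : b - T θ = ∑ j', Pi.single j' ((b - T θ) j') := (Finset.univ_sum_single _).symm
        rw [this]
        apply Submodule.sum_mem
        intro j' _
        have hsingle : (Pi.single j' ((b - T θ) j') : Fin m' → R) =
            ((b - T θ) j') • (Pi.single j' (1 : R) : Fin m' → R) := by
          ext i
          by_cases h : i = j'
          · subst h
            simp
          · simp [Pi.single_eq_of_ne h]
        rw [hsingle]
        exact Submodule.smul_mem_smul (hIt (hdiff j')) trivial
      have hmem2 : b - T θ ∈ Z := by
        apply Submodule.sub_mem _ hbZ
        apply hBZ
        exact ⟨θ, rfl⟩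
      have hinter := hAR (cAR + j) (by omega)
      have hmem3 : b - T θ ∈ maximalIdeal R ^ j • Z := by
        have h1 : b - T θ ∈ (maximalIdeal R ^ (cAR + j)) • ⊤ ⊓ Z := ⟨hmem1, hmem2⟩
        rw [hinter] at h1
        have h2 : cAR + j - cAR = j := by omega
        rw [h2] at h1
        exact Submodule.smul_mono le_rfl inf_le_right h1
      have : b = T θ + (b - T θ) := by ring
      rw [this]
      exact Submodule.add_mem _ (Submodule.mem_sup_left ⟨θ, rfl⟩)
        (Submodule.mem_sup_right hmem3)
    -- Krull intersection: b ∈ B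
    have hbB : b ∈ B := by
      have hq0 : ∀ j : ℕ, B.mkQ b ∈ (maximalIdeal R ^ j • ⊤ : Submodule R ((Fin m' → R) ⧸ B)) := by
        intro j
        obtain ⟨u, hu, v, hv, huv⟩ := Submodule.mem_sup.1 (hstep j)
        have hqu : B.mkQ u = 0 := by
          rw [Submodule.mkQ_apply, Submodule.Quotient.mk_eq_zero]
          exact hu
        have : B.mkQ b = B.mkQ v := by
          rw [← huv, map_add, hqu, zero_add]
        rw [this]
        have hmap : B.mkQ v ∈ Submodule.map B.mkQ (maximalIdeal R ^ j • Z) :=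
          Submodule.mem_map_of_mem hv
        rw [Submodule.map_smul''] at hmap
        exact Submodule.smul_mono le_rfl le_top hmap
      have hbot := Ideal.iInf_pow_smul_eq_bot_of_isLocalRing (M := (Fin m' → R) ⧸ B)
        (maximalIdeal R) hmne
      have : B.mkQ b ∈ (⨅ j : ℕ, maximalIdeal R ^ j • ⊤ : Submodule R ((Fin m' → R) ⧸ B)) :=
        Submodule.mem_iInf _ |>.2 hq0
      rw [hbot, Submodule.mem_bot, Submodule.mkQ_apply, Submodule.Quotient.mk_eq_zero] at this
      exact this
    obtain ⟨θ, hθ⟩ := hbB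
    have hθk : ∀ j', θ (k j') = b j' := by
      intro j'
      have := congrFun (congrArg (fun w : Fin m' → R => w) hθ) j'
      rw [← hTapp θ j']
      exact congrFun hθ j'
    -- construct the splitting
    set γ : (Fin n → R) →ₗ[R] M := α - f.comp θ with hγ
    have hγk : ∀ j', γ (k j') = 0 := by
      intro j'
      rw [hγ, LinearMap.sub_apply, LinearMap.comp_apply, hθk, hb, sub_self]
    have hγK : K ≤ LinearMap.ker γ := by
      rw [← hk, Submodule.span_le]
      rintro w ⟨j', rfl⟩
      rw [SetLike.mem_coe, LinearMap.mem_ker]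
      exact hγk j'
    set e := LinearMap.quotKerEquivOfSurjective π hπsurj with he
    set s : N' →ₗ[R] M := (Submodule.liftQ K γ hγK).comp e.symm.toLinearMap with hs
    have hse : ∀ v : Fin n → R, s (π v) = γ v := by
      intro v
      have h1 : e (Submodule.Quotient.mk v) = π v := by
        rw [he]
        rfl
      have h2 : e.symm (π v) = Submodule.Quotient.mk v := by
        rw [← h1, LinearEquiv.symm_apply_apply]
      rw [hs, LinearMap.comp_apply, LinearEquiv.coe_toLinearMap, h2, Submodule.liftQ_apply]
    have hps : ∀ y : N', p (s y) = y := by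
      intro y
      obtain ⟨v, rfl⟩ := hπsurj y
      rw [hse, hγ, LinearMap.sub_apply, map_sub, hpα, LinearMap.comp_apply]
      have : p (f (θ v)) = 0 := by
        rw [hp, Submodule.mkQ_apply, Submodule.Quotient.mk_eq_zero]
        exact ⟨θ v, rfl⟩
      rw [this, sub_zero]
    set g0 : M →ₗ[R] M := LinearMap.id - s.comp p with hg0
    have hg0mem : ∀ y : M, g0 y ∈ LinearMap.range f := by
      intro y
      have : p (g0 y) = 0 := by
        rw [hg0, LinearMap.sub_apply, LinearMap.id_apply, LinearMap.comp_apply, map_sub, hps]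
        rw [sub_self]
      rw [hp, Submodule.mkQ_apply, Submodule.Quotient.mk_eq_zero] at this
      exact this
    set ef := LinearEquiv.ofInjective f hfinj with hef
    refine ⟨ef.symm.toLinearMap.comp (g0.codRestrict (LinearMap.range f) hg0mem), ?_⟩
    apply LinearMap.ext
    intro r
    rw [LinearMap.comp_apply, LinearMap.comp_apply, LinearMap.id_apply]
    have h1 : g0 (f r) = f r := by
      rw [hg0, LinearMap.sub_apply, LinearMap.id_apply, LinearMap.comp_apply]
      have : p (f r) = 0 := by
        rw [hp, Submodule.mkQ_apply, Submodule.Quotient.mk_eq_zero]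
        exact ⟨r, rfl⟩
      rw [this, map_zero, sub_zero]
    have h2 : (g0.codRestrict (LinearMap.range f) hg0mem) (f r) = ef r := by
      apply Subtype.ext
      rw [LinearMap.codRestrict_apply, h1]
      rw [hef, LinearEquiv.ofInjective_apply]
    rw [LinearEquiv.coe_toLinearMap, h2, LinearEquiv.symm_apply_apply]

end Main

end HochsterAux


/-- **Hochster.**  Let `(R, m)` be an approximately Gorenstein Noetherian local ring with a
sequence `{I_t}` of `m`-primary irreducible ideals cofinal with the powers of `m`, and let
`f : R → M` be a homomorphism of finitely generated `R`-modules.  Then `f` is a split injection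
if and only if `f ⊗ R/I_t : R/I_t → M/I_t M` is injective for every `t`. -/
theorem split_iff_injective_mod_irreducible
    (R : Type u) [CommRing R] [IsLocalRing R] [IsNoetherianRing R]
    (hAG : IsApproximatelyGorenstein R)
    (I : ℕ → Ideal R)
    (hprim : ∀ t, (I t).radical = maximalIdeal R)
    (hirr : ∀ t, IsIrreducibleIdeal (I t))
    (hcof : ∀ n : ℕ, ∃ t₀, ∀ t ≥ t₀, I t ≤ maximalIdeal R ^ n)
    (M : Type u) [AddCommGroup M] [Module R M] [Module.Finite R M]
    (f : R →ₗ[R] M) :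
    (∃ g : M →ₗ[R] R, g.comp f = LinearMap.id) ↔
      ∀ t, ∀ x : R, f x ∈ I t • (⊤ : Submodule R M) → x ∈ I t :=
  HochsterAux.main_thm R I hprim (fun t => hirr t) hcof M f
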